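/- Let n ≥ 1, let ζ = exp(2πi/n) ∈ ℂ, let θ ∈ ℝ and t = exp(iθ). Then 2^(n−1) · f_t = T_n − C (cos(n·θ)) in ℝ[X], where T_n is the n-th Chebyshev polynomial of the first kind over ℝ. In particular only the constant term of f_t depends on θ. -/

import Mathlib

open Polynomial Finset

lemma prod_prim_aux {n : ℕ} (hn : 0 < n) {ζ : ℂ} (h : IsPrimitiveRoot ζ n) (x y : ℂ) :
    ∏ k ∈ Finset.range n, (x - ζ ^ k * y) = x ^ n - y ^ n := by
  have himg : (Finset.range n).image (ζ ^ ·) = Polynomial.nthRootsFinset n (1 : ℂ) := by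
    apply Finset.eq_of_subset_of_card_le
    · intro z hz
      simp only [Finset.mem_image, Finset.mem_range] at hz
      obtain ⟨k, _, rfl⟩ := hz
      exact (Polynomial.mem_nthRootsFinset hn (1 : ℂ)).2
        (by rw [← pow_mul, mul_comm, pow_mul, h.pow_eq_one, one_pow])
    · rw [h.card_nthRootsFinset, Finset.card_image_of_injOn h.injOn_pow, Finset.card_range]
  rw [h.pow_sub_pow_eq_prod_sub_mul x y hn, ← himg, Finset.prod_image h.injOn_pow]

theorem f_eq_chebyshev (n : ℕ) (hn : 1 ≤ n)
    (ζ : ℂ) (hζ : ζ = Complex.exp (2 * Real.pi * Complex.I / n))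
    (θ : ℝ) (t : ℂ) (ht : t = Complex.exp (θ * Complex.I)) :
    C ((2 : ℝ) ^ (n - 1)) * (∏ k ∈ Finset.range n, (X - C (Complex.re (t * ζ ^ k)))) =
      Polynomial.Chebyshev.T ℝ n - C (Real.cos (n * θ)) := by
  have hprim : IsPrimitiveRoot ζ n := by
    rw [hζ]; exact Complex.isPrimitiveRoot_exp n (by omega)
  have ht0 : t ≠ 0 := ht ▸ Complex.exp_ne_zero _
  -- conj of t * ζ ^ k is its inverse
  have hconj : ∀ k : ℕ, (starRingEnd ℂ) (t * ζ ^ k) = (t * ζ ^ k)⁻¹ := by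
    intro k
    have h1 : (starRingEnd ℂ) t = t⁻¹ := by
      rw [ht, ← Complex.exp_conj, ← Complex.exp_neg]
      congr 1
      simp [Complex.conj_I]
    have h2 : (starRingEnd ℂ) ζ = ζ⁻¹ := by
      rw [hζ, ← Complex.exp_conj, ← Complex.exp_neg]
      congr 1
      simp only [map_div₀, map_mul, Complex.conj_I, Complex.conj_ofReal, map_ofNat,
        Complex.conj_natCast]
      ring
    rw [map_mul, map_pow, h1, h2, mul_inv, inv_pow]
  apply Polynomial.map_injective (algebraMap ℝ ℂ) (algebraMap ℝ ℂ).injective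
  rw [Polynomial.map_mul, Polynomial.map_prod, Polynomial.map_sub,
    Polynomial.Chebyshev.map_T, map_C, map_C]
  simp only [Polynomial.map_sub, Polynomial.map_X, map_C]
  apply Polynomial.funext
  intro z
  obtain ⟨w, rfl⟩ := Complex.cos_surjective z
  simp only [eval_mul, eval_prod, eval_sub, eval_X, eval_C,
    Polynomial.Chebyshev.T_complex_cos]
  set u := Complex.exp (w * Complex.I) with hu
  have hu0 : u ≠ 0 := Complex.exp_ne_zero _
  have hfac : ∀ k ∈ Finset.range n,
      Complex.cos w - (algebraMap ℝ ℂ) (t * ζ ^ k).re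
        = (2 * u)⁻¹ * ((u - t * ζ ^ k) * (u - (t * ζ ^ k)⁻¹)) := by
    intro k _
    have hv0 : t * ζ ^ k ≠ 0 := mul_ne_zero ht0 (pow_ne_zero _ (hprim.ne_zero (by omega)))
    have hre : ((t * ζ ^ k).re : ℂ) = (t * ζ ^ k + (t * ζ ^ k)⁻¹) / 2 := by
      rw [← hconj k, Complex.add_conj]
      push_cast; ring
    have hcos : Complex.cos w = (u + u⁻¹) / 2 := by
      rw [Complex.cos, hu, ← Complex.exp_neg]
      ring_nf
    rw [Complex.coe_algebraMap, hre, hcos]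
    generalize t * ζ ^ k = v at hv0 ⊢
    field_simp
    ring
  rw [Finset.prod_congr rfl hfac, Finset.prod_mul_distrib, Finset.prod_mul_distrib,
    Finset.prod_const]
  have hp1 : ∏ k ∈ Finset.range n, (u - t * ζ ^ k) = u ^ n - t ^ n := by
    have := prod_prim_aux (by omega) hprim u t
    simpa [mul_comm] using this
  have hp2 : ∏ k ∈ Finset.range n, (u - (t * ζ ^ k)⁻¹) = u ^ n - (t⁻¹) ^ n := by
    have := prod_prim_aux (by omega) hprim.inv u t⁻¹
    simp only [mul_inv, inv_pow] at *
    convert this using 2 with k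
    ring
  rw [hp1, hp2]
  have hun : u ^ n = Complex.exp ((n : ℂ) * w * Complex.I) := by
    rw [hu, ← Complex.exp_nat_mul]; ring_nf
  have htn : t ^ n = Complex.exp ((n : ℂ) * θ * Complex.I) := by
    rw [ht, ← Complex.exp_nat_mul]; ring_nf
  have hcosnw : Complex.cos ((n : ℤ) * w) = (u ^ n + (u ^ n)⁻¹) / 2 := by
    rw [Complex.cos, hun, ← Complex.exp_neg]
    push_cast
    ring_nf
  have hcosnθ : ((Real.cos (n * θ) : ℝ) : ℂ) = (t ^ n + (t ^ n)⁻¹) / 2 := by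
    rw [Complex.ofReal_cos, Complex.cos, htn, ← Complex.exp_neg]
    push_cast
    ring_nf
  rw [Finset.card_range, hcosnw]
  simp only [Complex.coe_algebraMap]
  rw [hcosnθ]
  obtain ⟨m, rfl⟩ : ∃ m, n = m + 1 := ⟨n - 1, by omega⟩
  have h2u : (2 * u)⁻¹ ^ (m + 1) = (2 ^ (m + 1))⁻¹ * (u ^ (m + 1))⁻¹ := by
    rw [mul_inv, mul_pow, inv_pow, inv_pow]
  rw [h2u]
  have hun0 : u ^ (m + 1) ≠ 0 := pow_ne_zero _ hu0
  have htn0 : t ^ (m + 1) ≠ 0 := pow_ne_zero _ ht0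
  push_cast
  rw [inv_pow]
  field_simp
  ring
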